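/- Let q be a prime power, m ≥ 1, 1 ≤ k ≤ n, and let (n_1, …, n_ℓ) be an ordered partition of n. Let C ⊆ (F_{q^m})^n be a linear code of dimension k whose minimum sum-rank distance with respect to (n_1, …, n_ℓ) equals n − k + 1 (i.e., C is MSRD). If G ∈ F_{q^m}^{k×n} is a generator matrix of C (G has rank k and its row space is C) satisfying G_{ij} = 0 for all i ∈ {1, …, k} and j ∈ Z_i, then the sets Z_1, …, Z_k ⊆ {1, …, n} satisfy |∩_{i∈Ω} Z_i| + |Ω| ≤ k for every nonempty Ω ⊆ {1, …, k}. -/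

import Mathlib

/-- The `F_q`-rank of a vector over `F_{q^m}`. -/
noncomputable def rankFq (Fq : Type*) {K : Type*} [Field Fq] [Field K] [Algebra Fq K]
    {ι : Type*} (y : ι → K) : ℕ :=
  Module.finrank Fq (Submodule.span Fq (Set.range y))

/-- The sum-rank weight with respect to the ordered partition `(n_1, …, n_ℓ)`. -/
noncomputable def sumRankWt (Fq : Type*) {K : Type*} [Field Fq] [Field K] [Algebra Fq K]
    {ℓ : ℕ} {nn : Fin ℓ → ℕ} (x : ((l : Fin ℓ) × Fin (nn l)) → K) : ℕ :=
  ∑ l : Fin ℓ, rankFq Fq (fun t : Fin (nn l) => x ⟨l, t⟩)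

lemma rankFq_le_card_support {Fq K : Type*} [Field Fq] [Field K] [Algebra Fq K]
    [FiniteDimensional Fq K] {ι : Type*} (y : ι → K) (S : Finset ι)
    (hy : ∀ t ∉ S, y t = 0) : rankFq Fq y ≤ S.card := by
  classical
  have h1 : Submodule.span Fq (Set.range y) ≤
      Submodule.span Fq ((S.image y : Finset K) : Set K) := by
    rw [Submodule.span_le]
    rintro _ ⟨t, rfl⟩
    by_cases h : t ∈ S
    · exact Submodule.subset_span (by
        simp only [Finset.coe_image, Set.mem_image, Finset.mem_coe]
        exact ⟨t, h, rfl⟩)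
    · rw [hy t h]; simp
  calc rankFq Fq y
      ≤ Module.finrank Fq (Submodule.span Fq ((S.image y : Finset K) : Set K)) :=
        Submodule.finrank_mono h1
    _ ≤ (S.image y).card := finrank_span_finset_le_card _
    _ ≤ S.card := Finset.card_image_le

/-- Necessity of the GM–MDS condition for MSRD codes: if an MSRD code (minimum
sum-rank distance exactly `n − k + 1`) has a generator matrix `G` with `G_{ij} = 0`
for all `j ∈ Z_i`, then `|∩_{i∈Ω} Z_i| + |Ω| ≤ k` for every nonempty `Ω`. -/
theorem support_constraints_of_MSRD_generator
    (q m : ℕ) (Fq K : Type*) [Field Fq] [Fintype Fq] (hq : Fintype.card Fq = q)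
    [Field K] [Algebra Fq K] (hm : Module.finrank Fq K = m) (hm1 : 1 ≤ m)
    (ℓ : ℕ) (hℓ : 1 ≤ ℓ) (nn : Fin ℓ → ℕ) (hnn : ∀ l, 1 ≤ nn l)
    (k : ℕ) (hk : 1 ≤ k) (hkn : k ≤ ∑ l, nn l)
    (C : Submodule K (((l : Fin ℓ) × Fin (nn l)) → K))
    (hdim : Module.finrank K C = k)
    (hd1 : ∀ c ∈ C, c ≠ 0 → (∑ l, nn l) - k + 1 ≤ sumRankWt Fq c)
    (hd2 : ∃ c ∈ C, c ≠ 0 ∧ sumRankWt Fq c = (∑ l, nn l) - k + 1)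
    (G : Matrix (Fin k) ((l : Fin ℓ) × Fin (nn l)) K)
    (hG : G.rank = k)
    (hrow : Submodule.span K (Set.range fun i : Fin k => G i) = C)
    (Z : Fin k → Finset ((l : Fin ℓ) × Fin (nn l)))
    (hsupp : ∀ (i : Fin k) (j : (l : Fin ℓ) × Fin (nn l)), j ∈ Z i → G i j = 0) :
    ∀ Ω : Finset (Fin k), Ω.Nonempty → (Ω.inf Z).card + Ω.card ≤ k := by
  classical
  have hFD : FiniteDimensional Fq K := FiniteDimensional.of_finrank_pos (by omega)
  intro Ω hΩ
  by_contra hcon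
  push_neg at hcon
  set n := ∑ l, nn l with hn
  have hcardJ : Fintype.card ((l : Fin ℓ) × Fin (nn l)) = n := by
    simp [hn]
  -- rows of G are linearly independent
  have hindep : LinearIndependent K (fun i : Fin k => G i) := by
    rw [linearIndependent_iff_card_eq_finrank_span, Set.finrank, Fintype.card_fin]
    have h := Matrix.rank_eq_finrank_span_row G
    rw [hG] at h
    exact h
  have hs1 : 1 ≤ Ω.card := Finset.Nonempty.card_pos hΩ
  obtain ⟨T, hTsub, hTcard⟩ :=
    Finset.exists_subset_card_eq (s := (Ω.inf Z)ᶜ) (n := min (Ω.card - 1) ((Ω.inf Z)ᶜ).card)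
      (min_le_right _ _)
  -- the restriction map
  let φ : (↥Ω → K) →ₗ[K] (↥T → K) :=
    { toFun := fun lam j => ∑ i : ↥Ω, lam i * G ↑i ↑j
      map_add' := by
        intro x y; funext j
        simp [add_mul, Finset.sum_add_distrib]
      map_smul' := by
        intro a x; funext j
        simp [Finset.mul_sum, mul_assoc]
      }
  have hTlt : Fintype.card ↥T < Fintype.card ↥Ω := by
    rw [Fintype.card_coe, Fintype.card_coe, hTcard]
    have := min_le_left (Ω.card - 1) ((Ω.inf Z)ᶜ).card
    omega
  have hninj : ¬ Function.Injective φ := by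
    intro hinj
    have h1 := LinearMap.finrank_le_finrank_of_injective hinj
    rw [Module.finrank_pi, Module.finrank_pi] at h1
    omega
  rw [Function.not_injective_iff] at hninj
  obtain ⟨a, b, hab, hne⟩ := hninj
  set lam : ↥Ω → K := a - b with hlam
  have hlamne : lam ≠ 0 := sub_ne_zero.2 hne
  have hφ : φ lam = 0 := by rw [hlam, map_sub, hab, sub_self]
  set c : ((l : Fin ℓ) × Fin (nn l)) → K := ∑ i ∈ Ω.attach, lam i • G ↑i with hc
  have hcapp : ∀ j, c j = ∑ i ∈ Ω.attach, lam i * G ↑i j := by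
    intro j
    rw [hc, Finset.sum_apply]
    rfl
  have hcC : c ∈ C := by
    rw [hc]
    refine Submodule.sum_mem _ fun i _ => Submodule.smul_mem _ _ ?_
    rw [← hrow]
    exact Submodule.subset_span ⟨↑i, rfl⟩
  have hcne : c ≠ 0 := by
    intro h0
    apply hlamne
    set lamf : Fin k → K := fun i => if h : i ∈ Ω then lam ⟨i, h⟩ else 0 with hlamf
    have h1 : c = ∑ i ∈ Ω, lamf i • G i := by
      rw [hc, ← Finset.sum_attach Ω (fun i => lamf i • G i)]
      exact Finset.sum_congr rfl fun i _ => by simp [hlamf, i.2]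
    have hsum : ∑ i : Fin k, lamf i • G i = c := by
      rw [h1]
      exact (Finset.sum_subset (Finset.subset_univ Ω)
        (fun i _ hi => by simp [hlamf, hi])).symm
    have hall := Fintype.linearIndependent_iff.mp hindep lamf (by rw [hsum, h0])
    funext i
    have hi := hall ↑i
    rw [hlamf] at hi
    simp only [i.2, dif_pos] at hi
    simpa using hi
  -- c vanishes on (Ω.inf Z) and on T
  have hvanish : ∀ j, j ∈ (Ω.inf Z) ∪ T → c j = 0 := by
    intro j hj
    rcases Finset.mem_union.mp hj with hjW | hjT
    · rw [hcapp]
      refine Finset.sum_eq_zero fun i _ => ?_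
      have hz : j ∈ Z ↑i := Finset.mem_of_subset (Finset.le_iff_subset.mp
        (Finset.inf_le i.2)) hjW
      rw [hsupp ↑i j hz, mul_zero]
    · have h : ∑ i : ↥Ω, lam i * G ↑i j = 0 := congrFun hφ ⟨j, hjT⟩
      rw [hcapp, ← h, ← Finset.univ_eq_attach]
  -- support of c
  set S : Finset ((l : Fin ℓ) × Fin (nn l)) := Finset.univ.filter fun j => c j ≠ 0
    with hSdef
  have hSsub : S ⊆ ((Ω.inf Z) ∪ T)ᶜ := by
    intro j hj
    rw [Finset.mem_compl]
    intro hmem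
    exact (Finset.mem_filter.mp hj).2 (hvanish j hmem)
  have hdisj : Disjoint (Ω.inf Z) T :=
    Finset.disjoint_left.mpr fun j hjW hjT => (Finset.mem_compl.mp (hTsub hjT)) hjW
  have hScard : S.card ≤ n - ((Ω.inf Z).card + T.card) := by
    calc S.card ≤ (((Ω.inf Z) ∪ T)ᶜ).card := Finset.card_le_card hSsub
      _ = Fintype.card ((l : Fin ℓ) × Fin (nn l)) - ((Ω.inf Z) ∪ T).card :=
          Finset.card_compl _
      _ = n - ((Ω.inf Z).card + T.card) := by
          rw [hcardJ, Finset.card_union_of_disjoint hdisj]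
  have hWTle : (Ω.inf Z).card + T.card ≤ n := by
    have h := Finset.card_le_univ ((Ω.inf Z) ∪ T)
    rwa [Finset.card_union_of_disjoint hdisj, hcardJ] at h
  -- sum-rank weight bound
  have hwt : sumRankWt Fq c ≤ S.card := by
    calc sumRankWt Fq c ≤ ∑ l : Fin ℓ,
          (Finset.univ.filter fun t : Fin (nn l) => c ⟨l, t⟩ ≠ 0).card :=
        Finset.sum_le_sum fun l _ => rankFq_le_card_support _ _
          (fun t ht => by simpa using ht)
      _ = (Finset.univ.sigma fun l : Fin ℓ =>
            Finset.univ.filter fun t : Fin (nn l) => c ⟨l, t⟩ ≠ 0).card := by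
        rw [Finset.card_sigma]
      _ = S.card := by
        congr 1
        ext ⟨l, t⟩
        simp [hSdef]
  have hd := hd1 c hcC hcne
  have hcomplcard : (((Ω.inf Z))ᶜ).card = n - (Ω.inf Z).card := by
    rw [Finset.card_compl, hcardJ]
  rw [hcomplcard] at hTcard
  have hwn : (Ω.inf Z).card ≤ n := by omega
  omega
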